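/- Let x ∈ ℝ⁷ be a unit vector and let u, v be an orthonormal pair of vectors both orthogonal to x. Then φ(x,u,v) = 1 if and only if v = x × u. (This is the pointwise form of: a cone C in ℝ⁷ is associative if and only if its link Σ = C ∩ S⁶ is a pseudoholomorphic curve in S⁶ with respect to the almost complex structure J_x(u) = x × u.) -/

import Mathlib

open RealInnerProductSpace

noncomputable section

/-- `ℝ⁷` with the Euclidean inner product. -/
abbrev R7 := EuclideanSpace ℝ (Fin 7)

/-- The standard basis vectors `e₁, …, e₇` of `ℝ⁷` (0-indexed). -/
def stdBasis (i : Fin 7) : R7 := EuclideanSpace.single i 1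

/-- `dx_i ∧ dx_j ∧ dx_k` evaluated on the triple `(x, y, z)` (0-indexed). -/
def dx3 (i j k : Fin 7) (x y z : R7) : ℝ :=
  x i * (y j * z k - y k * z j) - x j * (y i * z k - y k * z i)
    + x k * (y i * z j - y j * z i)

/-- The associative calibration
`φ = dx₁₂₃ + dx₁₄₅ + dx₁₆₇ + dx₂₄₆ − dx₂₅₇ − dx₃₄₇ − dx₃₅₆` (0-indexed here). -/
def phi (x y z : R7) : ℝ :=
  dx3 0 1 2 x y z + dx3 0 3 4 x y z + dx3 0 5 6 x y z + dx3 1 3 5 x y z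
    - dx3 1 4 6 x y z - dx3 2 3 6 x y z - dx3 2 4 5 x y z

/-- The cross product on `ℝ⁷`: the unique vector with `⟪x × y, z⟫ = φ(x,y,z)` for all `z`. -/
def cross (x y : R7) : R7 := ∑ i, phi x y (stdBasis i) • stdBasis i


lemma cross_coord (x y : R7) (j : Fin 7) : cross x y j = phi x y (stdBasis j) := by
  have : cross x y j = ∑ i, phi x y (stdBasis i) * (stdBasis i j) := by
    rw [cross, WithLp.ofLp_sum]; exact Finset.sum_apply j Finset.univ _
  rw [this]
  simp [stdBasis, EuclideanSpace.single_apply]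

lemma inner_expand (a b : R7) : ⟪a, b⟫ = ∑ i, a i * b i := by
  simp [PiLp.inner_apply, RCLike.inner_apply, mul_comm]

set_option maxHeartbeats 4000000 in
lemma phi_eq_inner (x y z : R7) : phi x y z = ⟪cross x y, z⟫ := by
  rw [inner_expand, Fin.sum_univ_seven]
  simp only [cross_coord]
  simp only [phi, dx3, stdBasis, EuclideanSpace.single_apply, Fin.reduceEq, reduceIte,
    if_true, if_false, mul_zero, zero_mul, mul_one, one_mul, sub_zero, zero_sub, add_zero,
    zero_add, neg_zero, mul_neg, neg_neg]
  ring

set_option maxHeartbeats 4000000 in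
lemma cross_norm (x y : R7) :
    ⟪cross x y, cross x y⟫ = ⟪x, x⟫ * ⟪y, y⟫ - ⟪x, y⟫ ^ 2 := by
  simp only [inner_expand, Fin.sum_univ_seven, cross_coord]
  simp only [phi, dx3, stdBasis, EuclideanSpace.single_apply, Fin.reduceEq, reduceIte,
    if_true, if_false, mul_zero, zero_mul, mul_one, one_mul, sub_zero, zero_sub, add_zero,
    zero_add, neg_zero, mul_neg, neg_neg]
  ring

/-- For a unit vector `x ∈ ℝ⁷` and an orthonormal pair `u, v` both
orthogonal to `x`: `φ(x,u,v) = 1` if and only if `v = x × u` (pointwise form of: a cone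
is associative iff its link is a pseudoholomorphic curve in `S⁶`). -/
theorem associative_cone_iff_pseudoholomorphic (x u v : R7)
    (hx : ‖x‖ = 1) (hu : ‖u‖ = 1) (hv : ‖v‖ = 1) (huv : ⟪u, v⟫ = 0)
    (hxu : ⟪x, u⟫ = 0) (hxv : ⟪x, v⟫ = 0) :
    phi x u v = 1 ↔ v = cross x u := by
  have hw1 : ⟪cross x u, cross x u⟫ = 1 := by
    rw [cross_norm, real_inner_self_eq_norm_sq, real_inner_self_eq_norm_sq, hx, hu, hxu]
    norm_num
  have hp : phi x u v = ⟪cross x u, v⟫ := phi_eq_inner x u v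
  constructor
  · intro h1
    have h2 : ⟪cross x u, v⟫ = 1 := hp.symm.trans h1
    have hvv : ⟪v, v⟫ = 1 := by rw [real_inner_self_eq_norm_sq, hv]; norm_num
    have hz : ⟪v - cross x u, v - cross x u⟫ = 0 := by
      have h3 : ⟪v, cross x u⟫ = 1 := (real_inner_comm (cross x u) v).trans h2
      rw [inner_sub_left, inner_sub_right, inner_sub_right, hvv, h2, h3, hw1]; ring
    have := inner_self_eq_zero.mp hz
    exact sub_eq_zero.mp this
  · intro h
    rw [hp, h, hw1]
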